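/- (Deodhar) Let (W,S) be a Coxeter system, T = ∪_{w∈W} wSw⁻¹ the set of reflections, and J ⊆ S. If t₁, t₂ ∈ T \ W_J with t₁ ≠ t₂, then t₁W_J ≠ t₂W_J; that is, distinct reflections not in W_J lie in distinct left cosets of the parabolic subgroup W_J. -/

import Mathlib

open scoped Pointwise

namespace DeodharProof

attribute [local instance] Classical.propDecidable

open CoxeterSystem List

variable {B W : Type*} [Group W] {M : CoxeterMatrix B} (cs : CoxeterSystem M W)

local prefix:100 "σ" => cs.simple
local prefix:100 "π" => cs.wordProd
local prefix:100 "ℓ" => cs.length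

/-- The function underlying the sign permutation attached to a simple reflection. -/
noncomputable def etaFun (i : B) (p : W × ℤˣ) : W × ℤˣ :=
  (σ i * p.1 * σ i, if p.1 = σ i then -p.2 else p.2)

lemma etaFun_involutive (i : B) : Function.Involutive (etaFun cs i) := by
  intro p
  by_cases h : p.1 = σ i
  · apply Prod.ext
    · simp [etaFun, h]
    · simp [etaFun, h]
  · have h2 : ¬(σ i * p.1 * σ i = σ i) := by
      intro hh
      apply h
      have := congrArg (fun x => σ i * x * σ i) hh
      simpa [mul_assoc] using this
    apply Prod.ext
    · simp [etaFun, h, h2, mul_assoc]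
    · simp [etaFun, h, h2]

/-- The sign permutation attached to a simple reflection. -/
noncomputable def eta (i : B) : Equiv.Perm (W × ℤˣ) :=
  Function.Involutive.toPerm _ (etaFun_involutive cs i)

lemma eta_apply (i : B) (p : W × ℤˣ) :
    eta cs i p = (σ i * p.1 * σ i, if p.1 = σ i then -p.2 else p.2) := rfl

lemma conj_rho (i j : B) (k : ℕ) :
    σ j * (σ i * σ j) ^ k * σ j = ((σ i * σ j) ^ k)⁻¹ := by
  induction k with
  | zero => simp
  | succ k ih =>
    have h1 : σ j * (σ i * σ j) ^ (k+1) * σ j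
        = (σ j * (σ i * σ j) ^ k * σ j) * (σ j * (σ i * σ j) * σ j) := by
      rw [pow_succ]
      simp [mul_assoc]
    have h2 : σ j * (σ i * σ j) * σ j = (σ i * σ j)⁻¹ := by
      simp [mul_assoc, mul_inv_rev]
    rw [h1, ih, h2, ← inv_pow, ← pow_succ, inv_pow]

lemma cond1 (i j : B) (k : ℕ) (w : W) :
    ((σ i * σ j) ^ k * w * ((σ i * σ j) ^ k)⁻¹ = σ j)
      ↔ w = (((σ i * σ j) ^ (2*k))⁻¹) * σ j := by
  set ρ := σ i * σ j with hρdef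
  have e1 : (ρ ^ k)⁻¹ * σ j * ρ ^ k = (ρ ^ (2*k))⁻¹ * σ j := by
    calc (ρ ^ k)⁻¹ * σ j * ρ ^ k
        = (ρ ^ k)⁻¹ * (σ j * ρ ^ k * σ j) * σ j := by simp [mul_assoc]
      _ = (ρ ^ k)⁻¹ * (ρ ^ k)⁻¹ * σ j := by rw [conj_rho cs i j k]
      _ = (ρ ^ (2*k))⁻¹ * σ j := by rw [two_mul, pow_add, mul_inv_rev]
  constructor
  · intro h
    rw [← e1, ← h]
    group
  · intro h
    rw [h, ← e1]
    group

lemma cond2 (i j : B) (k : ℕ) (w : W) :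
    (σ j * ((σ i * σ j) ^ k * w * ((σ i * σ j) ^ k)⁻¹) * σ j = σ i)
      ↔ w = (((σ i * σ j) ^ (2*k+1))⁻¹) * σ j := by
  set ρ := σ i * σ j with hρdef
  have e0 : σ j * σ i * σ j = ρ⁻¹ * σ j := by
    rw [hρdef, mul_inv_rev]
    simp [mul_assoc]
  have e1 : (ρ ^ k)⁻¹ * (σ j * σ i * σ j) * ρ ^ k = (ρ ^ (2*k+1))⁻¹ * σ j := by
    calc (ρ ^ k)⁻¹ * (σ j * σ i * σ j) * ρ ^ k
        = (ρ ^ k)⁻¹ * ρ⁻¹ * (σ j * ρ ^ k * σ j) * σ j := by rw [e0]; simp [mul_assoc]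
      _ = (ρ ^ k)⁻¹ * ρ⁻¹ * (ρ ^ k)⁻¹ * σ j := by rw [conj_rho cs i j k]
      _ = (ρ ^ (2*k+1))⁻¹ * σ j := by
          have hexp : k + 1 + k = 2*k+1 := by omega
          rw [← inv_pow, ← inv_pow, ← pow_succ, ← pow_add, hexp, inv_pow]
  constructor
  · intro h
    have h' : ρ ^ k * w * (ρ ^ k)⁻¹ = σ j * σ i * σ j := by
      have := congrArg (fun x => σ j * x * σ j) h
      simpa [mul_assoc] using this
    rw [← e1, ← h']
    group
  · intro h
    have h' : ρ ^ k * w * (ρ ^ k)⁻¹ = σ j * σ i * σ j := by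
      rw [h, ← e1]
      group
    rw [h']
    simp [mul_assoc]




lemma eta_pow_apply (i j : B) (k : ℕ) (w : W) (ε : ℤˣ) :
    ((eta cs i * eta cs j) ^ k) (w, ε)
      = ((σ i * σ j) ^ k * w * ((σ i * σ j) ^ k)⁻¹,
         ε * ∏ n ∈ Finset.range (2*k),
            (if w = (((σ i * σ j) ^ n)⁻¹) * σ j then (-1 : ℤˣ) else 1)) := by
  set ρ := σ i * σ j with hρ
  induction k with
  | zero => simp
  | succ k ih =>
    rw [pow_succ', Equiv.Perm.mul_apply, ih, Equiv.Perm.mul_apply, eta_apply, eta_apply]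
    dsimp only
    have hrange : 2*(k+1) = (2*k) + 1 + 1 := by ring
    rw [hrange, Finset.prod_range_succ, Finset.prod_range_succ]
    apply Prod.ext
    · dsimp only
      rw [hρ, pow_succ']
      rw [mul_inv_rev (σ i * σ j), mul_inv_rev (σ i), inv_simple, inv_simple]
      simp [mul_assoc]
    · dsimp only
      rw [if_congr (cond1 cs i j k w) rfl rfl, if_congr (cond2 cs i j k w) rfl rfl]
      split_ifs with h1 h2 h2 <;> simp [mul_neg, neg_neg, mul_one, mul_comm, mul_left_comm, mul_assoc]
lemma eta_liftable : M.IsLiftable (eta cs) := by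
  intro i j
  apply Equiv.ext
  rintro ⟨w, ε⟩
  have hρm : (σ i * σ j) ^ (M i j) = 1 := cs.simple_mul_simple_pow i j
  rw [eta_pow_apply, hρm]
  have h2 : 2 * M i j = M i j + M i j := by ring
  rw [h2, Finset.prod_range_add]
  have heq : ∀ n ∈ Finset.range (M i j),
      (if w = (((σ i * σ j) ^ (M i j + n))⁻¹) * σ j then (-1 : ℤˣ) else 1)
        = (if w = (((σ i * σ j) ^ n)⁻¹) * σ j then (-1 : ℤˣ) else 1) := by
    intro n _
    rw [pow_add, hρm, one_mul]
  rw [Finset.prod_congr rfl heq, Int.units_mul_self, mul_one]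
  simp

/-- The sign representation of the Coxeter group. -/
noncomputable def phi : W →* Equiv.Perm (W × ℤˣ) := cs.lift ⟨eta cs, eta_liftable cs⟩

/-- The sign cocycle. -/
noncomputable def chi (w x : W) : ℤˣ := ((phi cs w) (x, 1)).2

lemma phi_simple (i : B) : phi cs (σ i) = eta cs i := cs.lift_apply_simple (eta_liftable cs) i

lemma phi_fst (w x : W) (ε : ℤˣ) : ((phi cs w) (x, ε)).1 = w * x * w⁻¹ := by
  revert x ε
  refine cs.simple_induction_left (p := fun v => ∀ x ε, ((phi cs v) (x, ε)).1 = v * x * v⁻¹) w ?_ ?_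
  · intro x ε
    simp [map_one]
  · intro v i ih x ε
    rw [map_mul, Equiv.Perm.mul_apply, phi_simple, eta_apply]
    dsimp only
    rw [ih x ε, mul_inv_rev, inv_simple]
    simp [mul_assoc]

lemma phi_snd (w x : W) (ε : ℤˣ) : ((phi cs w) (x, ε)).2 = ε * chi cs w x := by
  revert x ε
  have key : ∀ w : W, ∀ x : W, ∀ ε : ℤˣ,
      ((phi cs w) (x, ε)).2 = ε * ((phi cs w) (x, 1)).2 := by
    intro w
    refine cs.simple_induction_left
      (p := fun v => ∀ x ε, ((phi cs v) (x, ε)).2 = ε * ((phi cs v) (x, 1)).2) w ?_ ?_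
    · intro x ε
      simp [map_one]
    · intro v i ih x ε
      rw [map_mul, Equiv.Perm.mul_apply, Equiv.Perm.mul_apply, phi_simple,
        eta_apply, eta_apply]
      dsimp only
      rw [ih x ε, ih x 1]
      have hfst : ((phi cs v) (x, ε)).1 = ((phi cs v) (x, 1)).1 := by
        rw [phi_fst, phi_fst]
      rw [hfst]
      split_ifs with h <;> simp [mul_neg, neg_neg, mul_one, one_mul, mul_comm, mul_left_comm, mul_assoc]
  intro x ε
  rw [key w x ε]
  rfl

lemma phi_apply (w x : W) (ε : ℤˣ) :
    (phi cs w) (x, ε) = (w * x * w⁻¹, ε * chi cs w x) :=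
  Prod.ext (phi_fst cs w x ε) (phi_snd cs w x ε)

lemma chi_one (x : W) : chi cs 1 x = 1 := by
  simp [chi, map_one]

lemma chi_mul (g h x : W) : chi cs (g * h) x = chi cs h x * chi cs g (h * x * h⁻¹) := by
  unfold chi
  rw [map_mul, Equiv.Perm.mul_apply, phi_apply cs h x 1, one_mul, phi_apply]
  rfl

lemma chi_simple (i : B) (x : W) : chi cs (σ i) x = if x = σ i then -1 else 1 := by
  unfold chi
  rw [phi_simple, eta_apply]

lemma chi_inv_conj (g x : W) : chi cs g⁻¹ (g * x * g⁻¹) = chi cs g x := by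
  have h := chi_mul cs g⁻¹ g x
  rw [inv_mul_cancel, chi_one] at h
  rcases Int.units_eq_one_or (chi cs g x) with h1 | h1 <;>
    rcases Int.units_eq_one_or (chi cs g⁻¹ (g * x * g⁻¹)) with h2 | h2 <;>
    rw [h1, h2] at h ⊢ <;> first | rfl | (exfalso; revert h; decide)




lemma mem_ris_of_chi_neg : ∀ (ω : List B) (x : W), chi cs (π ω) x = -1 → x ∈ cs.rightInvSeq ω := by
  intro ω
  induction ω with
  | nil =>
    intro x h
    rw [wordProd_nil, chi_one] at h
    exact absurd h (by decide)
  | cons i ω ih =>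
    intro x h
    rw [wordProd_cons, chi_mul] at h
    show x ∈ (π ω)⁻¹ * (σ i) * (π ω) :: cs.rightInvSeq ω
    rcases Int.units_eq_one_or (chi cs (π ω) x) with h1 | h1
    · rw [h1, one_mul, chi_simple] at h
      have hc : π ω * x * (π ω)⁻¹ = σ i := by
        by_contra hc
        rw [if_neg hc] at h
        exact absurd h (by decide)
      have hx : x = (π ω)⁻¹ * (σ i) * (π ω) := by
        rw [← hc]
        group
      rw [hx]
      exact List.mem_cons_self
    · exact List.mem_cons_of_mem _ (ih x h1)

lemma length_mul_lt_of_chi_neg (w x : W) (h : chi cs w x = -1) : ℓ (w * x) < ℓ w := by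
  obtain ⟨ω, hlen, hw⟩ := cs.exists_reduced_word w
  have hx : x ∈ cs.rightInvSeq ω := mem_ris_of_chi_neg cs ω x (by rwa [← hw])
  obtain ⟨j, hj, hje⟩ := List.mem_iff_getElem.mp hx
  have hjlen : j < ω.length := by
    rw [length_rightInvSeq] at hj
    exact hj
  have hgetD : (cs.rightInvSeq ω).getD j 1 = x := by
    rw [List.getD_eq_getElem _ _ hj]
    exact hje
  have herase : w * x = π (ω.eraseIdx j) := by
    rw [hw, ← hgetD]
    exact cs.wordProd_mul_getD_rightInvSeq ω j
  have h1 : ℓ (w * x) ≤ (ω.eraseIdx j).length := by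
    rw [herase]
    exact cs.length_wordProd_le _
  have h2 : (ω.eraseIdx j).length + 1 = ω.length := List.length_eraseIdx_add_one hjlen
  have h3 := hlen.eq
  rw [← hw] at h3
  omega

lemma chi_refl {t : W} (ht : cs.IsReflection t) : chi cs t t = -1 := by
  obtain ⟨w, i, rfl⟩ := ht
  set T := w * σ i * w⁻¹ with hT
  have split : T = w * (σ i * w⁻¹) := by rw [hT, mul_assoc]
  have step1 := chi_mul cs w (σ i * w⁻¹) T
  rw [← split] at step1
  have step2 := chi_mul cs (σ i) w⁻¹ T
  have c1 : w⁻¹ * T * w⁻¹⁻¹ = σ i := by rw [hT]; group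
  have c2 : (σ i * w⁻¹) * T * (σ i * w⁻¹)⁻¹ = σ i := by rw [hT]; group
  have c3 : chi cs w⁻¹ T = chi cs w (σ i) := by rw [hT]; exact chi_inv_conj cs w (σ i)
  rw [c1, c3, chi_simple, if_pos rfl] at step2
  rw [step2, c2] at step1
  rw [step1]
  rcases Int.units_eq_one_or (chi cs w (σ i)) with h1 | h1 <;> rw [h1] <;> decide

section Parabolic

variable (J : Set B)

lemma wordProd_mem_P {ω : List B} (hω : ∀ b ∈ ω, b ∈ J) :
    π ω ∈ Subgroup.closure (cs.simple '' J) := by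
  induction ω with
  | nil => rw [wordProd_nil]; exact Subgroup.one_mem _
  | cons i ω ih =>
    rw [wordProd_cons]
    exact Subgroup.mul_mem _
      (Subgroup.subset_closure ⟨i, hω i (List.mem_cons_self), rfl⟩)
      (ih (fun b hb => hω b (List.mem_cons_of_mem i hb)))

lemma exists_J_word {u : W} (hu : u ∈ Subgroup.closure (cs.simple '' J)) :
    ∃ ω : List B, (∀ b ∈ ω, b ∈ J) ∧ π ω = u := by
  induction hu using Subgroup.closure_induction with
  | mem x hx =>
    obtain ⟨j, hj, rfl⟩ := hx
    exact ⟨[j], by simpa using hj, by simp⟩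
  | one => exact ⟨[], by simp, by simp⟩
  | mul x y _ _ hx hy =>
    obtain ⟨ω₁, hω₁, h1⟩ := hx
    obtain ⟨ω₂, hω₂, h2⟩ := hy
    refine ⟨ω₁ ++ ω₂, ?_, by rw [wordProd_append, h1, h2]⟩
    intro b hb
    rcases List.mem_append.mp hb with h | h
    · exact hω₁ b h
    · exact hω₂ b h
  | inv x _ hx =>
    obtain ⟨ω, hω, h1⟩ := hx
    exact ⟨ω.reverse, fun b hb => hω b (List.mem_reverse.mp hb),
      by rw [wordProd_reverse, h1]⟩

lemma ris_mem_P : ∀ (ω : List B), (∀ b ∈ ω, b ∈ J) →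
    ∀ x ∈ cs.rightInvSeq ω, x ∈ Subgroup.closure (cs.simple '' J) := by
  intro ω
  induction ω with
  | nil => intro _ x hx; simp at hx
  | cons i ω ih =>
    intro hω x hx
    rcases List.mem_cons.mp hx with h | h
    · rw [h]
      have hπ : π ω ∈ Subgroup.closure (cs.simple '' J) :=
        wordProd_mem_P cs J (fun b hb => hω b (List.mem_cons_of_mem i hb))
      exact Subgroup.mul_mem _ (Subgroup.mul_mem _ (Subgroup.inv_mem _ hπ)
        (Subgroup.subset_closure ⟨i, hω i (List.mem_cons_self), rfl⟩)) hπ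
    · exact ih (fun b hb => hω b (List.mem_cons_of_mem i hb)) x h

lemma mem_P_of_chi_neg {u x : W} (hu : u ∈ Subgroup.closure (cs.simple '' J))
    (h : chi cs u x = -1) : x ∈ Subgroup.closure (cs.simple '' J) := by
  obtain ⟨ω, hω, rfl⟩ := exists_J_word cs J hu
  exact ris_mem_P cs J ω hω x (mem_ris_of_chi_neg cs ω x h)

lemma chi_eq_one_of_not_mem {u x : W} (hu : u ∈ Subgroup.closure (cs.simple '' J))
    (hx : x ∉ Subgroup.closure (cs.simple '' J)) : chi cs u x = 1 := by
  rcases Int.units_eq_one_or (chi cs u x) with h | h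
  · exact h
  · exact absurd (mem_P_of_chi_neg cs J hu h) hx

end Parabolic




lemma pal {t : W} (ht : cs.IsReflection t) (i : B) (hd : ℓ (σ i * t) < ℓ t)
    (hne : t ≠ σ i) : ℓ (σ i * t * σ i) + 2 ≤ ℓ t := by
  have hlen1 : ℓ (σ i * t) + 1 = ℓ t := by
    rcases cs.length_simple_mul t i with h | h <;> omega
  obtain ⟨ω₀, hω₀red, hω₀⟩ := cs.exists_reduced_word' (σ i * t)
  set ω := i :: ω₀ with hωdef
  have hπ : π ω = t := by
    rw [hωdef, wordProd_cons, ← hω₀]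
    simp
  have hω₀len : ω₀.length = ℓ (σ i * t) := by
    have h := hω₀red
    unfold CoxeterSystem.IsReduced at h
    rw [← hω₀] at h
    exact h.symm
  have hlenω : ω.length = ℓ t := by
    rw [hωdef, List.length_cons]
    omega
  have hred : cs.IsReduced ω := by
    unfold CoxeterSystem.IsReduced
    rw [hπ, hlenω]
  have hmem : t ∈ cs.rightInvSeq ω :=
    mem_ris_of_chi_neg cs ω t (by rw [hπ]; exact chi_refl cs ht)
  obtain ⟨j, hj, hje⟩ := List.mem_iff_getElem.mp hmem
  have hjlen : j < ω.length := by rwa [length_rightInvSeq] at hj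
  have hgetD : (cs.rightInvSeq ω).getD j 1 = t := by
    rw [List.getD_eq_getElem _ _ hj]
    exact hje
  have hform := cs.getD_rightInvSeq ω j
  rw [hgetD] at hform
  have hget? : ω[j]? = some (ω[j]) := by
    rw [List.getElem?_eq_getElem hjlen]
  rw [hget?] at hform
  simp only [Option.map_some, Option.getD_some] at hform
  set β := π (ω.drop (j+1)) with hβ
  set α := π (ω.take j) with hα
  have hsplit : α * (σ (ω[j]) * β) = t := by
    rw [hα, hβ, ← hπ]
    conv_rhs => rw [← List.take_append_drop j ω]
    rw [wordProd_append]
    congr 1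
    rw [List.drop_eq_getElem_cons hjlen, wordProd_cons]
  have hαβ : α = β⁻¹ := by
    have h1 : α * (σ ω[j] * β) = β⁻¹ * (σ ω[j] * β) := by
      rw [hsplit, hform, mul_assoc]
    exact mul_right_cancel h1
  have hlα : ℓ α = j := by
    have h1 := hred.take j
    unfold CoxeterSystem.IsReduced at h1
    rw [hα, h1, List.length_take]
    omega
  have hlβ : ℓ β = ω.length - (j+1) := by
    have h1 := hred.drop (j+1)
    unfold CoxeterSystem.IsReduced at h1
    rw [hβ, h1, List.length_drop]
  have hjmid : j + (j + 1) = ω.length := by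
    have h1 : ℓ α = ℓ β := by rw [hαβ, cs.length_inv]
    omega
  have hj1 : 1 ≤ j := by
    rcases Nat.eq_zero_or_pos j with hj0 | hj0
    · exfalso
      subst hj0
      apply hne
      have hα1 : α = 1 := by
        rw [hα]
        simp
      have hβ1 : β = 1 := by
        have h2 : (1 : W) = β⁻¹ := by rw [← hα1, hαβ]
        rw [← inv_inv β, ← h2, inv_one]
      have hj' : ω[0] = i := rfl
      rw [← hsplit, hα1, hβ1, hj', one_mul, mul_one]
    · exact hj0
  have htake : ω.take j = i :: ω₀.take (j-1) := by
    have hj' : j = (j-1) + 1 := by omega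
    rw [hωdef, hj']
    rfl
  set γ := π (ω₀.take (j-1)) with hγ
  have hαγ : α = σ i * γ := by rw [hα, htake, wordProd_cons, hγ]
  have ht2 : t = α * σ (ω[j]) * α⁻¹ := by
    rw [← hsplit, hαβ, mul_assoc, inv_inv]
  have hfinal : σ i * t * σ i = γ * σ (ω[j]) * γ⁻¹ := by
    rw [ht2, hαγ, mul_inv_rev, inv_simple]
    simp [mul_assoc]
  have hb1 : ℓ (σ i * t * σ i) ≤ ℓ γ + 1 + ℓ γ := by
    rw [hfinal]
    calc ℓ (γ * σ (ω[j]) * γ⁻¹) ≤ ℓ (γ * σ (ω[j])) + ℓ (γ⁻¹) := cs.length_mul_le _ _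
      _ ≤ ℓ γ + ℓ (σ (ω[j])) + ℓ (γ⁻¹) := by
          have := cs.length_mul_le γ (σ (ω[j]))
          omega
      _ = ℓ γ + 1 + ℓ γ := by rw [cs.length_simple, cs.length_inv]
  have hγle : ℓ γ ≤ j - 1 := by
    have h1 := cs.length_wordProd_le (ω₀.take (j-1))
    have h2 : (ω₀.take (j-1)).length ≤ j - 1 := by
      rw [List.length_take]
      omega
    rw [hγ] at *
    omega
  omega

lemma chi_conj_conj (i : B) (x y : W) (hx : x⁻¹ = x) :
    chi cs (σ i * x * σ i) (σ i * y * σ i)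
      = chi cs (σ i) (σ i * y * σ i) * (chi cs x y * chi cs (σ i) (x * y * x)) := by
  set Y := σ i * y * σ i with hY
  have e1 := chi_mul cs (σ i * x) (σ i) Y
  have c1 : σ i * Y * (σ i)⁻¹ = y := by
    rw [hY, inv_simple]
    simp [mul_assoc]
  rw [c1] at e1
  have e2 := chi_mul cs (σ i) x y
  rw [hx] at e2
  rw [e2] at e1
  exact e1

lemma bad : ∀ n : ℕ, ∀ S : Set W,
    (∀ x ∈ S, cs.IsReflection x) →
    (∀ x ∈ S, ∀ y ∈ S, x * y * x ∈ S) →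
    (∀ x ∈ S, ∀ y ∈ S, chi cs x y = -1) →
    ∀ a ∈ S, ∀ b ∈ S, a ≠ b → ℓ a ≤ n → False := by
  intro n
  induction n using Nat.strong_induction_on with
  | _ n IH =>
    intro S hrefl hconj hchi a haS b hbS hab hlen
    have ha1 : a ≠ 1 := by
      intro h
      have hodd := (hrefl a haS).odd_length
      rw [h, cs.length_one] at hodd
      simpa using hodd
    obtain ⟨i, hi⟩ := cs.exists_leftDescent_of_ne_one ha1
    by_cases hsS : σ i ∈ S
    · rcases eq_or_ne a (σ i) with hasi | hasi
      · have hb := hchi (σ i) hsS b hbS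
        have hbne : b ≠ σ i := fun h => hab (by rw [hasi, h])
        rw [chi_simple, if_neg hbne] at hb
        exact absurd hb (by decide)
      · have ha := hchi (σ i) hsS a haS
        rw [chi_simple, if_neg hasi] at ha
        exact absurd ha (by decide)
    · have hasi : a ≠ σ i := fun h => hsS (h ▸ haS)
      have hpal := pal cs (hrefl a haS) i hi hasi
      have hlpos : 1 ≤ ℓ a := by
        have hodd := (hrefl a haS).odd_length
        rcases Nat.eq_zero_or_pos (ℓ a) with h0 | h1
        · rw [h0] at hodd; simpa using hodd
        · exact h1
      refine IH (ℓ (σ i * a * σ i)) (by omega) ((fun x => σ i * x * σ i) '' S)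
        ?_ ?_ ?_ (σ i * a * σ i) ⟨a, haS, rfl⟩ (σ i * b * σ i) ⟨b, hbS, rfl⟩ ?_ le_rfl
      · rintro x ⟨z, hz, rfl⟩
        have := (hrefl z hz).conj (σ i)
        rwa [inv_simple] at this
      · rintro x ⟨z, hz, rfl⟩ y ⟨z', hz', rfl⟩
        refine ⟨z * z' * z, hconj z hz z' hz', ?_⟩
        simp [mul_assoc]
      · rintro x ⟨z, hz, rfl⟩ y ⟨z', hz', rfl⟩
        have hzinv : z⁻¹ = z := (hrefl z hz).inv
        rw [chi_conj_conj cs i z z' hzinv]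
        have hz'ne : σ i * z' * σ i ≠ σ i := by
          intro h
          apply hsS
          have hz'eq : z' = σ i := by
            have := congrArg (fun q => σ i * q * σ i) h
            simpa [mul_assoc] using this
          rwa [← hz'eq]
        have hzz'ne : z * z' * z ≠ σ i := by
          intro h
          exact hsS (h ▸ hconj z hz z' hz')
        rw [chi_simple, if_neg hz'ne, chi_simple, if_neg hzz'ne, hchi z hz z' hz']
        simp
      · intro h
        apply hab
        have := congrArg (fun q => σ i * q * σ i) h
        simpa [mul_assoc] using this



end DeodharProof

/-- **Deodhar's lemma.** Let `(W,S)` be a Coxeter system, `T` the set of reflections,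
and `J ⊆ S`. Distinct reflections not lying in the standard parabolic subgroup `W_J`
lie in distinct left cosets of `W_J`. -/
theorem distinct_reflections_distinct_cosets
    {B W : Type*} [Group W] {M : CoxeterMatrix B} (cs : CoxeterSystem M W)
    (J : Set B) (t₁ t₂ : W)
    (ht₁ : cs.IsReflection t₁) (ht₂ : cs.IsReflection t₂)
    (ht₁J : t₁ ∉ Subgroup.closure (cs.simple '' J))
    (ht₂J : t₂ ∉ Subgroup.closure (cs.simple '' J))
    (hne : t₁ ≠ t₂) :
    t₁ • (Subgroup.closure (cs.simple '' J) : Set W) ≠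
      t₂ • (Subgroup.closure (cs.simple '' J) : Set W) := by
  intro hEq
  set P : Subgroup W := Subgroup.closure (cs.simple '' J) with hPdef
  have hmem : t₁ ∈ t₂ • (P : Set W) := by
    rw [← hEq]
    exact mem_own_leftCoset _ _
  have hu0 : t₂⁻¹ * t₁ ∈ P := (mem_leftCoset_iff t₂).mp hmem
  rw [ht₂.inv] at hu0
  set u := t₂ * t₁ with hudef
  have ht1sq : t₁ * t₁ = 1 := ht₁.mul_self
  have ht2sq : t₂ * t₂ = 1 := ht₂.mul_self
  have hu1 : u ≠ 1 := by
    intro h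
    apply hne
    have h2 : t₂ * (t₂ * t₁) = t₂ * 1 := by rw [← hudef, h]
    rwa [← mul_assoc, ht2sq, one_mul, mul_one] at h2
  have hconj1 : t₁ * u * t₁⁻¹ = u⁻¹ := by
    rw [ht₁.inv, hudef, mul_inv_rev, ht₁.inv, ht₂.inv]
    simp [mul_assoc, ht1sq]
  have hconjz : ∀ k : ℤ, t₁ * u ^ k * t₁ = u ^ (-k) := by
    intro k
    have h1 : t₁ * u ^ k * t₁⁻¹ = (t₁ * u * t₁⁻¹) ^ k := by
      have h2 := map_zpow (MulAut.conj t₁) u k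
      simpa [MulAut.conj_apply] using h2.symm
    calc t₁ * u ^ k * t₁ = t₁ * u ^ k * t₁⁻¹ := by rw [ht₁.inv]
      _ = (t₁ * u * t₁⁻¹) ^ k := h1
      _ = (u⁻¹) ^ k := by rw [hconj1]
      _ = u ^ (-k) := by rw [inv_zpow, ← zpow_neg]
  have hmove : ∀ l : ℤ, t₁ * u ^ (-l) = u ^ l * t₁ := by
    intro l
    have h2 := hconjz (-l)
    rw [neg_neg] at h2
    calc t₁ * u ^ (-l) = (t₁ * u ^ (-l) * t₁) * t₁ := by rw [mul_assoc, ht1sq, mul_one]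
      _ = u ^ l * t₁ := by rw [h2]
  set a : ℤ → W := fun k => u ^ k * t₁ with ha
  have amul : ∀ m k : ℤ, a m * a k = u ^ (m - k) := by
    intro m k
    show (u ^ m * t₁) * (u ^ k * t₁) = u ^ (m - k)
    have h1 : (u ^ m * t₁) * (u ^ k * t₁) = u ^ m * (t₁ * u ^ k * t₁) := by
      simp [mul_assoc]
    rw [h1, hconjz k, ← zpow_add, ← sub_eq_add_neg]
  have ainv : ∀ k, (a k)⁻¹ = a k := by
    intro k
    have h1 : a k * a k = 1 := by rw [amul k k, sub_self, zpow_zero]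
    exact inv_eq_of_mul_eq_one_right h1
  have hut : u * t₁ = t₂ := by rw [hudef, mul_assoc, ht1sq, mul_one]
  have arefl : ∀ k : ℤ, cs.IsReflection (a k) := by
    intro k
    rcases Int.even_or_odd k with ⟨l, hl⟩ | ⟨l, hl⟩
    · have he : a k = u ^ l * t₁ * (u ^ l)⁻¹ := by
        show u ^ k * t₁ = u ^ l * t₁ * (u ^ l)⁻¹
        rw [← zpow_neg, mul_assoc, hmove l, ← mul_assoc, ← zpow_add, hl]
      rw [he]
      exact ht₁.conj (u ^ l)
    · have he : a k = u ^ l * t₂ * (u ^ l)⁻¹ := by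
        show u ^ k * t₁ = u ^ l * t₂ * (u ^ l)⁻¹
        rw [← hut, ← zpow_neg]
        calc u ^ k * t₁ = u ^ (l + 1) * (u ^ l * t₁) := by
              rw [← mul_assoc, ← zpow_add, hl]; ring_nf
          _ = u ^ (l + 1) * (t₁ * u ^ (-l)) := by rw [hmove l]
          _ = u ^ l * (u * t₁) * u ^ (-l) := by
              rw [zpow_add, zpow_one]
              simp [mul_assoc]
      rw [he]
      exact ht₂.conj (u ^ l)
  have hanotP : ∀ k : ℤ, a k ∉ P := by
    intro k hk
    apply ht₁J
    have h1 : t₁ = (u ^ k)⁻¹ * (a k) := by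
      show t₁ = (u ^ k)⁻¹ * (u ^ k * t₁)
      rw [← mul_assoc, inv_mul_cancel, one_mul]
    rw [hPdef] at *
    rw [h1]
    exact Subgroup.mul_mem _ (Subgroup.inv_mem _ (Subgroup.zpow_mem _ hu0 k)) hk
  have haconj : ∀ m k : ℤ, a m * a k * a m = a (2*m - k) := by
    intro m k
    rw [amul m k]
    show u ^ (m - k) * (u ^ m * t₁) = u ^ (2*m - k) * t₁
    rw [← mul_assoc, ← zpow_add]
    congr 2
    ring
  have hstep : ∀ v : W, v ∈ P → ∀ j k : ℤ, DeodharProof.chi cs (v * a j) (a k) = DeodharProof.chi cs (a j) (a k) := by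
    intro v hv j k
    rw [DeodharProof.chi_mul]
    have h1 : a j * a k * (a j)⁻¹ = a (2*j - k) := by rw [ainv j]; exact haconj j k
    rw [h1, DeodharProof.chi_eq_one_of_not_mem cs J hv (hanotP _), mul_one]
  have hmutual : ∀ m k : ℤ, DeodharProof.chi cs (a m) (a k) = -1 := by
    intro m k
    have main : ∀ d : ℤ, DeodharProof.chi cs (a (k + d)) (a k) = -1 := by
      intro d
      induction d using Int.induction_on with
      | zero => rw [add_zero]; exact DeodharProof.chi_refl cs (arefl k)
      | succ n ih =>
        have he : a (k + (n+1)) = u * a (k + n) := by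
          show u ^ (k + ((n:ℤ)+1)) * t₁ = u * (u ^ (k + (n:ℤ)) * t₁)
          rw [← mul_assoc, ← zpow_one_add]
          congr 2
          ring
        rw [he, hstep u hu0 (k + n) k]
        exact ih
      | pred n ih =>
        have he : a (k + (-(n:ℤ) - 1)) = u⁻¹ * a (k + -(n:ℤ)) := by
          show u ^ (k + (-(n:ℤ) - 1)) * t₁ = u⁻¹ * (u ^ (k + -(n:ℤ)) * t₁)
          rw [← mul_assoc, ← zpow_neg_one, ← zpow_add]
          congr 2
          ring
        rw [he, hstep u⁻¹ (Subgroup.inv_mem _ hu0) (k + -(n:ℤ)) k]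
        exact ih
    have h2 : m = k + (m - k) := by ring
    rw [h2]
    exact main (m - k)
  have h01 : a 0 ≠ a 1 := by
    intro h
    apply hu1
    calc u = u ^ ((1:ℤ) - 0) := by norm_num
      _ = a 1 * a 0 := (amul 1 0).symm
      _ = a 0 * a 0 := by rw [h]
      _ = u ^ ((0:ℤ) - 0) := amul 0 0
      _ = 1 := by norm_num
  exact DeodharProof.bad cs (cs.length (a 0)) (Set.range a)
    (by rintro x ⟨k, rfl⟩; exact arefl k)
    (by rintro x ⟨k, rfl⟩ y ⟨k', rfl⟩; exact ⟨2*k - k', (haconj k k').symm⟩)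
    (by rintro x ⟨k, rfl⟩ y ⟨k', rfl⟩; exact hmutual k k')
    (a 0) ⟨0, rfl⟩ (a 1) ⟨1, rfl⟩ h01 le_rfl
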